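/- The tetrahedron E^1_{(5,1)} = conv{(1,0,0),(0,0,1),(2,7,1),(-1,-2,-1)} contains exactly five lattice points (its four vertices and the origin); the four tetrahedra spanned by the origin together with three of its vertices have normalized volumes 2, 3, 5 and 7; consequently E^1_{(5,1)} is lattice-spanning (sublattice index 1) but contains no unimodular tetrahedron with vertices among its lattice points. -/

import Mathlib

/-- embedding of integer points into `ℝ³` -/
noncomputable def rr (v : Fin 3 → ℤ) : Fin 3 → ℝ := fun i => (v i : ℝ)

/-- The subgroup of `ℤ³` generated by all differences of lattice points;
`P` is lattice-spanning if it is all of `ℤ³`. -/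
def diffLat (A : Set (Fin 3 → ℤ)) : AddSubgroup (Fin 3 → ℤ) :=
  AddSubgroup.closure {v | ∃ x ∈ A, ∃ y ∈ A, v = x - y}

/-- Normalized volume of the tetrahedron with vertices `f 0, f 1, f 2, f 3`. -/
def normVol (f : Fin 4 → (Fin 3 → ℤ)) : ℕ :=
  (Matrix.det (Matrix.of fun i j : Fin 3 => (f i.succ - f 0) j)).natAbs

def u1 : Fin 3 → ℤ := ![1, 0, 0]
def u2 : Fin 3 → ℤ := ![0, 0, 1]
def u3 : Fin 3 → ℤ := ![2, 7, 1]
def u4 : Fin 3 → ℤ := ![-1, -2, -1]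

/-- The tetrahedron `E¹_{(5,1)}`. -/
noncomputable def E51 : Set (Fin 3 → ℝ) :=
  convexHull ℝ {rr u1, rr u2, rr u3, rr u4}

/-- Its lattice points. -/
def L51 : Set (Fin 3 → ℤ) := {v | rr v ∈ E51}

lemma convex_hs (a b c d : ℝ) :
    Convex ℝ {x : Fin 3 → ℝ | 0 ≤ a * x 0 + b * x 1 + c * x 2 + d} := by
  have h : {x : Fin 3 → ℝ | 0 ≤ a * x 0 + b * x 1 + c * x 2 + d}
      = {x : Fin 3 → ℝ | -d ≤ a * x 0 + b * x 1 + c * x 2} := by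
    ext x; constructor <;> intro h <;> simp only [Set.mem_setOf_eq] at * <;> linarith
  rw [h]
  exact convex_halfSpace_ge
    ⟨fun x y => by simp [Pi.add_apply]; ring,
     fun t x => by simp [Pi.smul_apply, smul_eq_mul]; ring⟩ (-d)

lemma hull_sub (a b c d : ℝ)
    (h1 : 0 ≤ a * rr u1 0 + b * rr u1 1 + c * rr u1 2 + d)
    (h2 : 0 ≤ a * rr u2 0 + b * rr u2 1 + c * rr u2 2 + d)
    (h3 : 0 ≤ a * rr u3 0 + b * rr u3 1 + c * rr u3 2 + d)
    (h4 : 0 ≤ a * rr u4 0 + b * rr u4 1 + c * rr u4 2 + d) :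
    E51 ⊆ {x : Fin 3 → ℝ | 0 ≤ a * x 0 + b * x 1 + c * x 2 + d} := by
  apply convexHull_min _ (convex_hs a b c d)
  intro x hx
  rcases hx with h | h | h | h <;> subst h <;> assumption

lemma L51_sub : ∀ v ∈ L51, v ∈ ({u1, u2, u3, u4, 0} : Set (Fin 3 → ℤ)) := by
  intro v hv
  have e1 := hull_sub 14 (-4) (-3) 3 (by norm_num [rr, u1, Matrix.cons_val_two, Matrix.tail_cons, Matrix.head_cons]) (by norm_num [rr, u2, Matrix.cons_val_two, Matrix.tail_cons, Matrix.head_cons])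
    (by norm_num [rr, u3, Matrix.cons_val_two, Matrix.tail_cons, Matrix.head_cons]) (by norm_num [rr, u4, Matrix.cons_val_two, Matrix.tail_cons, Matrix.head_cons]) hv
  have e2 := hull_sub (-5) (-1) 12 5 (by norm_num [rr, u1, Matrix.cons_val_two, Matrix.tail_cons, Matrix.head_cons]) (by norm_num [rr, u2, Matrix.cons_val_two, Matrix.tail_cons, Matrix.head_cons])
    (by norm_num [rr, u3, Matrix.cons_val_two, Matrix.tail_cons, Matrix.head_cons]) (by norm_num [rr, u4, Matrix.cons_val_two, Matrix.tail_cons, Matrix.head_cons]) hv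
  have e3 := hull_sub (-2) 3 (-2) 2 (by norm_num [rr, u1, Matrix.cons_val_two, Matrix.tail_cons, Matrix.head_cons]) (by norm_num [rr, u2, Matrix.cons_val_two, Matrix.tail_cons, Matrix.head_cons])
    (by norm_num [rr, u3, Matrix.cons_val_two, Matrix.tail_cons, Matrix.head_cons]) (by norm_num [rr, u4, Matrix.cons_val_two, Matrix.tail_cons, Matrix.head_cons]) hv
  have e4 := hull_sub (-7) 2 (-7) 7 (by norm_num [rr, u1, Matrix.cons_val_two, Matrix.tail_cons, Matrix.head_cons]) (by norm_num [rr, u2, Matrix.cons_val_two, Matrix.tail_cons, Matrix.head_cons])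
    (by norm_num [rr, u3, Matrix.cons_val_two, Matrix.tail_cons, Matrix.head_cons]) (by norm_num [rr, u4, Matrix.cons_val_two, Matrix.tail_cons, Matrix.head_cons]) hv
  simp only [Set.mem_setOf_eq, rr] at e1 e2 e3 e4
  have i1 : (0:ℤ) ≤ 14 * v 0 - 4 * v 1 - 3 * v 2 + 3 := by
    have : ((0:ℤ):ℝ) ≤ ((14 * v 0 - 4 * v 1 - 3 * v 2 + 3 : ℤ) : ℝ) := by push_cast; linarith
    exact_mod_cast this
  have i2 : (0:ℤ) ≤ -5 * v 0 - v 1 + 12 * v 2 + 5 := by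
    have : ((0:ℤ):ℝ) ≤ ((-5 * v 0 - v 1 + 12 * v 2 + 5 : ℤ) : ℝ) := by push_cast; linarith
    exact_mod_cast this
  have i3 : (0:ℤ) ≤ -2 * v 0 + 3 * v 1 - 2 * v 2 + 2 := by
    have : ((0:ℤ):ℝ) ≤ ((-2 * v 0 + 3 * v 1 - 2 * v 2 + 2 : ℤ) : ℝ) := by push_cast; linarith
    exact_mod_cast this
  have i4 : (0:ℤ) ≤ -7 * v 0 + 2 * v 1 - 7 * v 2 + 7 := by
    have : ((0:ℤ):ℝ) ≤ ((-7 * v 0 + 2 * v 1 - 7 * v 2 + 7 : ℤ) : ℝ) := by push_cast; linarith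
    exact_mod_cast this
  have key : (v 0 = 1 ∧ v 1 = 0 ∧ v 2 = 0) ∨ (v 0 = 0 ∧ v 1 = 0 ∧ v 2 = 1) ∨
      (v 0 = 2 ∧ v 1 = 7 ∧ v 2 = 1) ∨ (v 0 = -1 ∧ v 1 = -2 ∧ v 2 = -1) ∨
      (v 0 = 0 ∧ v 1 = 0 ∧ v 2 = 0) := by
    have hc : -1 ≤ v 2 ∧ v 2 ≤ 1 := by constructor <;> nlinarith
    have ha : -1 ≤ v 0 ∧ v 0 ≤ 2 := by constructor <;> nlinarith
    have hb : -2 ≤ v 1 ∧ v 1 ≤ 7 := by constructor <;> nlinarith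
    obtain ⟨hc1, hc2⟩ := hc; obtain ⟨ha1, ha2⟩ := ha; obtain ⟨hb1, hb2⟩ := hb
    set a := v 0; set b := v 1; set c := v 2
    interval_cases a <;> interval_cases b <;> interval_cases c <;> omega
  have veq : ∀ w : Fin 3 → ℤ, v 0 = w 0 → v 1 = w 1 → v 2 = w 2 → v = w := by
    intro w h0 h1 h2; funext i; fin_cases i <;> assumption
  rcases key with ⟨a, b, c⟩ | ⟨a, b, c⟩ | ⟨a, b, c⟩ | ⟨a, b, c⟩ | ⟨a, b, c⟩
  · exact Or.inl (veq u1 (by simpa [u1] using a) (by simpa [u1] using b) (by simpa [u1] using c))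
  · exact Or.inr (Or.inl (veq u2 (by simpa [u2] using a) (by simpa [u2] using b)
      (by simpa [u2] using c)))
  · exact Or.inr (Or.inr (Or.inl (veq u3 (by simpa [u3] using a) (by simpa [u3] using b)
      (by simpa [u3] using c))))
  · exact Or.inr (Or.inr (Or.inr (Or.inl (veq u4 (by simpa [u4] using a) (by simpa [u4] using b)
      (by simpa [u4] using c)))))
  · exact Or.inr (Or.inr (Or.inr (Or.inr (veq 0 (by simpa using a) (by simpa using b)
      (by simpa using c)))))

lemma mem1 : u1 ∈ L51 := subset_convexHull ℝ _ (by left; rfl)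
lemma mem2 : u2 ∈ L51 := subset_convexHull ℝ _ (by right; left; rfl)
lemma mem3 : u3 ∈ L51 := subset_convexHull ℝ _ (by right; right; left; rfl)
lemma mem4 : u4 ∈ L51 := subset_convexHull ℝ _ (by right; right; right; rfl)

lemma mem0 : (0 : Fin 3 → ℤ) ∈ L51 := by
  have hconv := convex_convexHull ℝ ({rr u1, rr u2, rr u3, rr u4} : Set (Fin 3 → ℝ))
  have h1 : rr u1 ∈ E51 := mem1
  have h2 : rr u2 ∈ E51 := mem2
  have h3 : rr u3 ∈ E51 := mem3
  have h4 : rr u4 ∈ E51 := mem4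
  have ha : ((3:ℝ)/8) • rr u1 + ((5:ℝ)/8) • rr u2 ∈ E51 :=
    hconv h1 h2 (by norm_num) (by norm_num) (by norm_num)
  have hb : ((2:ℝ)/9) • rr u3 + ((7:ℝ)/9) • rr u4 ∈ E51 :=
    hconv h3 h4 (by norm_num) (by norm_num) (by norm_num)
  have hc : ((8:ℝ)/17) • (((3:ℝ)/8) • rr u1 + ((5:ℝ)/8) • rr u2)
      + ((9:ℝ)/17) • (((2:ℝ)/9) • rr u3 + ((7:ℝ)/9) • rr u4) ∈ E51 :=
    hconv ha hb (by norm_num) (by norm_num) (by norm_num)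
  have heq : rr 0 = ((8:ℝ)/17) • (((3:ℝ)/8) • rr u1 + ((5:ℝ)/8) • rr u2)
      + ((9:ℝ)/17) • (((2:ℝ)/9) • rr u3 + ((7:ℝ)/9) • rr u4) := by
    funext i
    fin_cases i <;>
      simp [rr, u1, u2, u3, u4, Pi.add_apply, Pi.smul_apply, smul_eq_mul] <;> norm_num
  show rr 0 ∈ E51
  rw [heq]; exact hc

lemma L51_eq : L51 = ({u1, u2, u3, u4, 0} : Set (Fin 3 → ℤ)) := by
  apply Set.Subset.antisymm L51_sub
  intro v hv
  rcases hv with h | h | h | h | h <;> subst h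
  · exact mem1
  · exact mem2
  · exact mem3
  · exact mem4
  · exact mem0

def pts5 : Fin 5 → (Fin 3 → ℤ) := ![u1, u2, u3, u4, 0]

set_option maxRecDepth 40000 in
lemma no_unimod : ∀ g : Fin 4 → Fin 5, normVol (pts5 ∘ g) ≠ 1 := by decide

lemma diffLat_top : diffLat L51 = ⊤ := by
  have gen : ∀ u, u ∈ L51 → u ∈ diffLat L51 := fun u hu =>
    AddSubgroup.subset_closure ⟨u, hu, 0, mem0, by simp⟩
  have g1 := gen u1 mem1
  have g2 := gen u2 mem2
  have g3 := gen u3 mem3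
  have g4 := gen u4 mem4
  have he2 : (![0,1,0] : Fin 3 → ℤ) ∈ diffLat L51 := by
    have h : (![0,1,0] : Fin 3 → ℤ) = u1 + 2 • u2 + u3 + 3 • u4 := by decide
    rw [h]
    exact add_mem (add_mem (add_mem g1 (nsmul_mem g2 2)) g3) (nsmul_mem g4 3)
  rw [eq_top_iff]
  intro v _
  have hv : v = v 0 • u1 + v 1 • ![0,1,0] + v 2 • u2 := by
    funext i
    fin_cases i <;> simp [u1, u2, Pi.add_apply, Pi.smul_apply, smul_eq_mul]
  rw [hv]
  exact add_mem (add_mem (zsmul_mem g1 _) (zsmul_mem he2 _)) (zsmul_mem g2 _)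

theorem stmt15 :
    -- exactly five lattice points: the four vertices and the origin
    L51 = {u1, u2, u3, u4, 0} ∧ L51.ncard = 5 ∧
    -- the four tetrahedra on the origin and three vertices have volumes 2, 3, 5, 7
    normVol ![0, u1, u2, u4] = 2 ∧
    normVol ![0, u2, u3, u4] = 3 ∧
    normVol ![0, u1, u3, u4] = 5 ∧
    normVol ![0, u1, u2, u3] = 7 ∧
    -- E¹_{(5,1)} is lattice-spanning
    (diffLat L51).index = 1 ∧
    -- but contains no unimodular tetrahedron with vertices among its lattice points
    ¬ ∃ f : Fin 4 → (Fin 3 → ℤ), (∀ i, f i ∈ L51) ∧ normVol f = 1 := by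
  refine ⟨L51_eq, ?_, by decide, by decide, by decide, by decide, ?_, ?_⟩
  · rw [L51_eq]
    have h : ({u1, u2, u3, u4, 0} : Set (Fin 3 → ℤ))
        = (↑({u1, u2, u3, u4, 0} : Finset (Fin 3 → ℤ))) := by simp
    rw [h, Set.ncard_coe_finset]
    decide
  · rw [diffLat_top]
    exact AddSubgroup.index_top
  · rintro ⟨f, hf, hvol⟩
    have hg : ∀ i, ∃ k : Fin 5, f i = pts5 k := by
      intro i
      have := hf i
      rw [L51_eq] at this
      rcases this with h | h | h | h | h
      · exact ⟨0, h⟩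
      · exact ⟨1, h⟩
      · exact ⟨2, h⟩
      · exact ⟨3, h⟩
      · exact ⟨4, h⟩
    choose g hgg using hg
    have hfg : f = pts5 ∘ g := funext hgg
    exact no_unimod g (hfg ▸ hvol)
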